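/- Let j : A → X be a closed embedding of topological spaces and f : A → Y a continuous map, and let P be the pushout of j and f, with co-projections k : X → P and l : Y → P (so the square with maps f, j, l, k is a pushout square of topological spaces). Then l : Y → P is a closed embedding, and the same square is also a pullback square: the map a ↦ (j(a), f(a)) is a homeomorphism from A onto the fiber product X ×_P Y = {(x,y) : k(x) = l(y)}. -/

import Mathlib

open Topology

universe u

/-- A commutative square of topological spaces
`f : A → Y`, `j : A → X`, `J : Y → Z`, `F : X → Z`
is a pushout square if it commutes and satisfies the universal property of the
pushout in the category of topological spaces. -/
def IsPushoutSquare {A Y X Z : Type u} [TopologicalSpace A] [TopologicalSpace Y]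
    [TopologicalSpace X] [TopologicalSpace Z]
    (f : C(A, Y)) (j : C(A, X)) (J : C(Y, Z)) (F : C(X, Z)) : Prop :=
  (∀ a, J (f a) = F (j a)) ∧
  ∀ (T : Type u) [TopologicalSpace T] (u : C(X, T)) (v : C(Y, T)),
    (∀ a, u (j a) = v (f a)) →
    ∃! w : C(Z, T), (∀ x, w (F x) = u x) ∧ (∀ y, w (J y) = v y)

section Aux

variable {A X Y : Type u} (j : A → X) (f : A → Y)

/-- The relation generating the pushout of `j` and `f`. -/
def pushRel : X ⊕ Y → X ⊕ Y → Prop :=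
  fun p q => ∃ a, p = Sum.inl (j a) ∧ q = Sum.inr (f a)

/-- An explicit description of the equivalence relation generated by `pushRel`,
valid when `j` is injective. -/
def bigRel : X ⊕ Y → X ⊕ Y → Prop
  | Sum.inl x, Sum.inl x' => x = x' ∨ ∃ a a', j a = x ∧ j a' = x' ∧ f a = f a'
  | Sum.inl x, Sum.inr y => ∃ a, j a = x ∧ f a = y
  | Sum.inr y, Sum.inl x => ∃ a, j a = x ∧ f a = y
  | Sum.inr y, Sum.inr y' => y = y'

lemma bigRel_of (a : A) : bigRel j f (Sum.inl (j a)) (Sum.inr (f a)) :=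
  show ∃ a', j a' = j a ∧ f a' = f a from ⟨a, rfl, rfl⟩

lemma bigRel_refl : ∀ p, bigRel j f p p
  | Sum.inl x => Or.inl rfl
  | Sum.inr y => rfl

lemma bigRel_symm : ∀ p q, bigRel j f p q → bigRel j f q p
  | Sum.inl _, Sum.inl _, h =>
      h.elim (fun h => Or.inl h.symm)
        (fun ⟨a, a', h1, h2, h3⟩ => Or.inr ⟨a', a, h2, h1, h3.symm⟩)
  | Sum.inl _, Sum.inr _, h => h
  | Sum.inr _, Sum.inl _, h => h
  | Sum.inr _, Sum.inr _, h => h.symm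

lemma bigRel_trans (hj : Function.Injective j) :
    ∀ p q r, bigRel j f p q → bigRel j f q r → bigRel j f p r
  | Sum.inl _, Sum.inl _, Sum.inl _, h1, h2 => by
      rcases h1 with rfl | ⟨a, a', rfl, rfl, hff⟩
      · exact h2
      rcases h2 with h | ⟨b, b', hb, rfl, hff'⟩
      · exact Or.inr ⟨a, a', rfl, h, hff⟩
      · exact Or.inr ⟨a, b', rfl, rfl, by rw [hff, hj hb.symm, hff']⟩
  | Sum.inl _, Sum.inl _, Sum.inr _, h1, h2 => by
      rcases h1 with rfl | ⟨a, a', rfl, rfl, hff⟩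
      · exact h2
      rcases h2 with ⟨b, hb, rfl⟩
      exact ⟨a, rfl, by rw [hff, hj hb.symm]⟩
  | Sum.inl _, Sum.inr _, Sum.inl _, h1, h2 => by
      rcases h1 with ⟨a, rfl, rfl⟩
      rcases h2 with ⟨a', rfl, hff⟩
      exact Or.inr ⟨a, a', rfl, rfl, hff.symm⟩
  | Sum.inl _, Sum.inr _, Sum.inr _, h1, h2 => by
      rcases h1 with ⟨a, rfl, rfl⟩
      exact ⟨a, rfl, h2⟩
  | Sum.inr _, Sum.inl _, Sum.inl _, h1, h2 => by
      rcases h1 with ⟨a, rfl, rfl⟩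
      rcases h2 with h | ⟨b, b', hb, rfl, hff⟩
      · exact ⟨a, h, rfl⟩
      · exact ⟨b', rfl, by rw [← hff, hj hb]⟩
  | Sum.inr _, Sum.inl _, Sum.inr _, h1, h2 => by
      rcases h1 with ⟨a, rfl, rfl⟩
      rcases h2 with ⟨a', ha', rfl⟩
      exact congrArg f (hj ha'.symm)
  | Sum.inr _, Sum.inr _, Sum.inl _, h1, h2 => by
      subst h1; exact h2
  | Sum.inr _, Sum.inr _, Sum.inr _, h1, h2 => h1.trans h2

lemma eqvGen_to_bigRel (hj : Function.Injective j) {p q : X ⊕ Y}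
    (h : Relation.EqvGen (pushRel j f) p q) : bigRel j f p q := by
  induction h with
  | rel p q h => rcases h with ⟨a, rfl, rfl⟩; exact ⟨a, rfl, rfl⟩
  | refl p => exact bigRel_refl j f p
  | symm p q _ ih => exact bigRel_symm j f p q ih
  | trans p q r _ _ ih1 ih2 => exact bigRel_trans j f hj p q r ih1 ih2

lemma mk_eq_iff_bigRel (hj : Function.Injective j) {p q : X ⊕ Y} :
    Quot.mk (pushRel j f) p = Quot.mk (pushRel j f) q ↔ bigRel j f p q := by
  constructor
  · intro h
    exact eqvGen_to_bigRel j f hj (Quot.eq.1 h)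
  · intro h
    match p, q, h with
    | Sum.inl x, Sum.inl x', h =>
        rcases h with rfl | ⟨a, a', rfl, rfl, hff⟩
        · rfl
        · calc Quot.mk _ (Sum.inl (j a)) = Quot.mk _ (Sum.inr (f a)) :=
                Quot.sound ⟨a, rfl, rfl⟩
            _ = Quot.mk _ (Sum.inr (f a')) := by rw [hff]
            _ = Quot.mk _ (Sum.inl (j a')) := (Quot.sound ⟨a', rfl, rfl⟩).symm
    | Sum.inl x, Sum.inr y, h =>
        rcases h with ⟨a, rfl, rfl⟩; exact Quot.sound ⟨a, rfl, rfl⟩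
    | Sum.inr y, Sum.inl x, h =>
        rcases h with ⟨a, rfl, rfl⟩; exact (Quot.sound ⟨a, rfl, rfl⟩).symm
    | Sum.inr y, Sum.inr y', h => rw [h]

end Aux

section QModel

variable {A X Y : Type u} [TopologicalSpace A] [TopologicalSpace X] [TopologicalSpace Y]
variable (j : C(A, X)) (f : C(A, Y))

/-- The explicit pushout. -/
def PushQ : Type u := Quot (pushRel (X := X) (Y := Y) j f)

instance : TopologicalSpace (PushQ j f) :=
  instTopologicalSpaceQuot

/-- First co-projection into the explicit pushout. -/
def kQ : C(X, PushQ j f) :=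
  ⟨fun x => Quot.mk _ (Sum.inl x), continuous_quot_mk.comp continuous_inl⟩

/-- Second co-projection into the explicit pushout. -/
def lQ : C(Y, PushQ j f) :=
  ⟨fun y => Quot.mk _ (Sum.inr y), continuous_quot_mk.comp continuous_inr⟩

lemma pushQ_isPushout : IsPushoutSquare f j (lQ j f) (kQ j f) := by
  refine ⟨fun a => (Quot.sound ⟨a, rfl, rfl⟩).symm, ?_⟩
  intro T _ u v huv
  have hcompat : ∀ p q, pushRel (X := X) (Y := Y) j f p q →
      Sum.elim u v p = Sum.elim u v q := by
    rintro p q ⟨a, rfl, rfl⟩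
    exact huv a
  refine ⟨⟨Quot.lift (Sum.elim u v) hcompat,
      continuous_quot_lift _ (u.continuous.sumElim v.continuous)⟩,
    ⟨fun x => rfl, fun y => rfl⟩, ?_⟩
  rintro w ⟨hw1, hw2⟩
  ext q
  refine Quot.inductionOn q ?_
  rintro (x | y)
  · exact hw1 x
  · exact hw2 y

end QModel

/-- If `j : A → X` is a closed embedding, `f : A → Y` is continuous, and `P` is the
pushout of `j` and `f` with co-projections `k : X → P` and `l : Y → P`, then `l` is a
closed embedding and the pushout square is also a pullback square: `a ↦ (j a, f a)` is
a homeomorphism from `A` onto the fiber product `X ×_P Y = {(x, y) | k x = l y}`. -/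
theorem closedEmbedding_pushout_and_pullback
    {A X Y P : Type u} [TopologicalSpace A] [TopologicalSpace X] [TopologicalSpace Y]
    [TopologicalSpace P]
    (j : C(A, X)) (f : C(A, Y)) (k : C(X, P)) (l : C(Y, P))
    (hj : IsClosedEmbedding j) (hsq : IsPushoutSquare f j l k) :
    IsClosedEmbedding l ∧
    ∃ e : A ≃ₜ {q : X × Y // k q.1 = l q.2}, ∀ a, (e a : X × Y) = (j a, f a) := by
  have hjinj : Function.Injective j := hj.injective
  have hQ := pushQ_isPushout j f
  -- comparison maps
  obtain ⟨φ, ⟨hφk, hφl⟩, -⟩ := hQ.2 P k l (fun a => (hsq.1 a).symm)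
  obtain ⟨ψ, ⟨hψk, hψl⟩, -⟩ := hsq.2 (PushQ j f) (kQ j f) (lQ j f) (fun a => (hQ.1 a).symm)
  -- φ ∘ ψ = id and ψ ∘ φ = id
  obtain ⟨idP, -, hidP⟩ := hsq.2 P k l (fun a => (hsq.1 a).symm)
  have h1 : φ.comp ψ = ContinuousMap.id P := by
    rw [hidP (φ.comp ψ) ⟨fun x => by simp [hψk x, hφk x], fun y => by simp [hψl y, hφl y]⟩,
      hidP (ContinuousMap.id P) ⟨fun x => rfl, fun y => rfl⟩]
  obtain ⟨idQ, -, hidQ⟩ := hQ.2 (PushQ j f) (kQ j f) (lQ j f) (fun a => (hQ.1 a).symm)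
  have h2 : ψ.comp φ = ContinuousMap.id (PushQ j f) := by
    rw [hidQ (ψ.comp φ) ⟨fun x => by simp [hφk x, hψk x], fun y => by simp [hφl y, hψl y]⟩,
      hidQ (ContinuousMap.id (PushQ j f)) ⟨fun x => rfl, fun y => rfl⟩]
  have h1' : ∀ p, φ (ψ p) = p := fun p => DFunLike.congr_fun h1 p
  have h2' : ∀ q, ψ (φ q) = q := fun q => DFunLike.congr_fun h2 q
  -- the comparison homeomorphism
  let h : PushQ j f ≃ₜ P :=
    { toFun := φ, invFun := ψ, left_inv := h2', right_inv := h1',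
      continuous_toFun := φ.continuous, continuous_invFun := ψ.continuous }
  -- lQ is a closed embedding
  have hlQ : IsClosedEmbedding (lQ j f) := by
    refine IsClosedEmbedding.of_continuous_injective_isClosedMap (lQ j f).continuous ?_ ?_
    · intro y y' hyy
      exact (mk_eq_iff_bigRel j f hjinj).1 hyy
    · intro C hC
      refine isQuotientMap_quot_mk.isClosed_preimage.1 ?_
      rw [isClosed_sum_iff]
      constructor
      · have : Sum.inl ⁻¹' (Quot.mk (pushRel (X := X) (Y := Y) j f) ⁻¹' (lQ j f '' C)) =
            j '' (f ⁻¹' C) := by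
          ext x
          simp only [Set.mem_preimage, Set.mem_image]
          constructor
          · rintro ⟨c, hc, hqc⟩
            obtain ⟨a, ha, hfa⟩ := (mk_eq_iff_bigRel j f hjinj).1 hqc.symm
            exact ⟨a, by rw [hfa]; exact hc, ha⟩
          · rintro ⟨a, ha, rfl⟩
            exact ⟨f a, ha, ((mk_eq_iff_bigRel j f hjinj).2 (bigRel_of _ _ a)).symm⟩
        refine (congrArg IsClosed this).mpr ?_
        exact hj.isClosedMap _ (hC.preimage f.continuous)
      · have : Sum.inr ⁻¹' (Quot.mk (pushRel (X := X) (Y := Y) j f) ⁻¹' (lQ j f '' C)) =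
            C := by
          ext y
          simp only [Set.mem_preimage, Set.mem_image]
          constructor
          · rintro ⟨c, hc, hqc⟩
            have hcy : c = y := (mk_eq_iff_bigRel j f hjinj).1 hqc
            exact hcy ▸ hc
          · intro hy
            exact ⟨y, hy, rfl⟩
        exact (congrArg IsClosed this).mpr hC
  constructor
  · have : ⇑l = ⇑h ∘ ⇑(lQ j f) := funext fun y => (hφl y).symm
    rw [this]
    exact h.isClosedEmbedding.comp hlQ
  · -- the pullback statement
    have hkl : ∀ x y, k x = l y ↔ kQ j f x = lQ j f y := by
      intro x y
      constructor
      · intro hxy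
        have := congrArg ψ hxy
        rwa [hψk x, hψl y] at this
      · intro hxy
        have := congrArg φ hxy
        rwa [hφk x, hφl y] at this
    have hset : {q : X × Y | kQ j f q.1 = lQ j f q.2} = {q : X × Y | k q.1 = l q.2} := by
      ext q
      exact (hkl q.1 q.2).symm
    -- bijection onto the Q-fiber product
    have hbij : Function.Bijective
        (fun a => (⟨(j a, f a), (mk_eq_iff_bigRel j f hjinj).2 (bigRel_of _ _ a)⟩ :
          {q : X × Y // kQ j f q.1 = lQ j f q.2})) := by
      constructor
      · intro a a' haa
        have := congrArg Subtype.val haa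
        exact hjinj (congrArg Prod.fst this)
      · rintro ⟨⟨x, y⟩, hxy⟩
        obtain ⟨a, ha, hfa⟩ := (mk_eq_iff_bigRel j f hjinj).1 hxy
        exact ⟨a, by simp [ha, hfa]⟩
    let e0 : A ≃ {q : X × Y // kQ j f q.1 = lQ j f q.2} := Equiv.ofBijective _ hbij
    have he0 : ∀ a, (e0 a : X × Y) = (j a, f a) := fun a => rfl
    have hcont : Continuous e0 := by
      apply Continuous.subtype_mk
      exact j.continuous.prodMk f.continuous
    have hcontsymm : Continuous e0.symm := by
      rw [hj.isInducing.continuous_iff]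
      have heq : ⇑j ∘ ⇑e0.symm = fun q : {q : X × Y // kQ j f q.1 = lQ j f q.2} =>
          q.val.1 := by
        funext q
        have := congrArg (fun q : {q : X × Y // kQ j f q.1 = lQ j f q.2} => q.val.1)
          (e0.apply_symm_apply q)
        exact this
      rw [heq]
      exact continuous_fst.comp continuous_subtype_val
    let e1 : A ≃ₜ {q : X × Y // kQ j f q.1 = lQ j f q.2} := ⟨e0, hcont, hcontsymm⟩
    exact ⟨e1.trans (Homeomorph.setCongr hset), fun a => rfl⟩
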